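/- arXiv:0907.5565 — 2 statements merged into one kernel-verified Lean document; each statement's English description precedes it below -/
import Mathlib

section
/- Let Ω ⊆ ℍ be a symmetric slice domain, f : Ω → ℍ slice regular, and S₀ = x₀ + y₀S ⊂ Ω a sphere. Then: f has a zero in S₀ if and only if f^c has a zero in S₀, if and only if f^s has a zero in S₀, if and only if f^s vanishes identically on S₀. -/
noncomputable section

abbrev H := Quaternion ℝ

/-- The sphere of quaternion imaginary units. -/
def Sph : Set H := {q : H | q ^ 2 = -1}

/-- The complex line (Slice) through 1 and `I`. -/
def Slice (I : H) : Set H := {q : H | ∃ x y : ℝ, q = (x : H) + y • I}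

/-- The 2-sphere `x + y𝕊`. -/
def sphSet (x y : ℝ) : Set H := {q : H | ∃ I ∈ Sph, q = (x : H) + y • I}

/-- The real axis inside the quaternions. -/
def realAxis : Set H := {q : H | ∃ r : ℝ, q = (r : H)}

/-- `f` is holomorphic on the `I`-Slice of `Ω`: at every point of `Ω ∩ L_I` the
map `(x,y) ↦ f(x+yI)` is (real) differentiable and satisfies the
Cauchy–Riemann equation `∂f/∂x + I ∂f/∂y = 0`. -/
def HoloSlice (Ω : Set H) (f : H → H) (I : H) : Prop :=
  ∀ x y : ℝ, (x : H) + y • I ∈ Ω →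
    DifferentiableAt ℝ (fun p : ℝ × ℝ => f ((p.1 : H) + p.2 • I)) (x, y) ∧
    fderiv ℝ (fun p : ℝ × ℝ => f ((p.1 : H) + p.2 • I)) (x, y) (1, 0)
      + I * fderiv ℝ (fun p : ℝ × ℝ => f ((p.1 : H) + p.2 • I)) (x, y) (0, 1) = 0

/-- Slice regular functions: every Slice restriction is holomorphic. -/
def SliceRegular (Ω : Set H) (f : H → H) : Prop :=
  ∀ I ∈ Sph, HoloSlice Ω f I

/-- A Slice domain: a domain intersecting the real axis whose slices are domains. -/
def IsSliceDomain (Ω : Set H) : Prop :=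
  IsOpen Ω ∧ IsConnected Ω ∧ (Ω ∩ realAxis).Nonempty ∧
  ∀ I ∈ Sph, IsConnected (Ω ∩ Slice I)

/-- Axially symmetric set. -/
def AxSymm (C : Set H) : Prop :=
  ∀ (x y : ℝ), ∀ I ∈ Sph, (x : H) + y • I ∈ C → ∀ J ∈ Sph, (x : H) + y • J ∈ C

/-- Symmetric Slice domain. -/
def IsSymmSliceDomain (Ω : Set H) : Prop := IsSliceDomain Ω ∧ AxSymm Ω

/-- Orthogonality of quaternions w.r.t. the Euclidean inner product `re (p * star q)`. -/
def Orth (I J : H) : Prop := (I * star J).re = 0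

/-- `F, G` give a splitting `f = F + G J` of `f` on the Slice `Ω ∩ L_I`,
with `F, G` holomorphic and `L_I`-valued. -/
structure IsSplitting (Ω : Set H) (f : H → H) (I J : H) (F G : H → H) : Prop where
  mapsF : ∀ q ∈ Ω ∩ Slice I, F q ∈ Slice I
  mapsG : ∀ q ∈ Ω ∩ Slice I, G q ∈ Slice I
  holoF : HoloSlice Ω F I
  holoG : HoloSlice Ω G I
  eq : ∀ q ∈ Ω ∩ Slice I, f q = F q + G q * J

/-- `h` is the regular product `f * g`: it is Slice regular and restricts on some
Slice `L_I` (with `I ⊥ J`, splittings `f = F + GJ`, `g = F' + G'J`) to the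
product formula.  (Note `star` is quaternionic conjugation, which restricts to
complex conjugation on each Slice.) -/
def IsRegularProduct (Ω : Set H) (f g h : H → H) : Prop :=
  SliceRegular Ω h ∧
  ∃ I ∈ Sph, ∃ J ∈ Sph, Orth I J ∧
    ∃ F G F' G' : H → H, IsSplitting Ω f I J F G ∧ IsSplitting Ω g I J F' G' ∧
      ∀ q ∈ Ω ∩ Slice I,
        h q = (F q * F' q - G q * star (G' (star q)))
            + (F q * G' q + G q * star (F' (star q))) * J

/-- `fc` is the regular conjugate of `f`. -/
def IsRegularConj (Ω : Set H) (f fc : H → H) : Prop :=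
  SliceRegular Ω fc ∧
  ∃ I ∈ Sph, ∃ J ∈ Sph, Orth I J ∧
    ∃ F G : H → H, IsSplitting Ω f I J F G ∧
      ∀ q ∈ Ω ∩ Slice I, fc q = star (F (star q)) - G q * J

/-- `fs` is the symmetrization `f^s = f * f^c` of `f`. -/
def IsSymmetrization (Ω : Set H) (f fs : H → H) : Prop :=
  ∃ fc : H → H, IsRegularConj Ω f fc ∧ IsRegularProduct Ω f fc fs

/-- The degenerate set of `f`: union of the spheres `x + y𝕊` (`y ≠ 0`)
contained in `Ω` on which `f` is constant. -/
def DegSet (Ω : Set H) (f : H → H) : Set H :=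
  {q : H | ∃ x y : ℝ, y ≠ 0 ∧ q ∈ sphSet x y ∧ sphSet x y ⊆ Ω ∧
    ∀ p ∈ sphSet x y, ∀ p' ∈ sphSet x y, f p = f p'}


section Aux
open Quaternion

lemma re_mul_comm (a b : H) : (a*b).re = (b*a).re := by
  simp only [Quaternion.re_mul]; ring

lemma mem_sph_iff {q : H} : q ∈ Sph ↔ q.re = 0 ∧ Quaternion.normSq q = 1 := by
  constructor
  · intro h
    have h' : q * q = -1 := by rw [← sq]; exact h
    rw [Quaternion.ext_iff] at h'
    simp only [Quaternion.re_mul, Quaternion.imI_mul, Quaternion.imJ_mul, Quaternion.imK_mul,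
      Quaternion.re_neg, Quaternion.imI_neg, Quaternion.imJ_neg, Quaternion.imK_neg,
      Quaternion.re_one, Quaternion.imI_one, Quaternion.imJ_one, Quaternion.imK_one] at h'
    obtain ⟨h1, h2, h3, h4⟩ := h'
    have hre : q.re = 0 := by nlinarith [sq_nonneg q.re, sq_nonneg q.imI, sq_nonneg q.imJ, sq_nonneg q.imK]
    refine ⟨hre, ?_⟩
    rw [Quaternion.normSq_def']
    nlinarith
  · rintro ⟨h1, h2⟩
    rw [Quaternion.normSq_def'] at h2
    show q^2 = -1
    rw [sq, Quaternion.ext_iff]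
    simp only [Quaternion.re_mul, Quaternion.imI_mul, Quaternion.imJ_mul, Quaternion.imK_mul,
      Quaternion.re_neg, Quaternion.imI_neg, Quaternion.imJ_neg, Quaternion.imK_neg,
      Quaternion.re_one, Quaternion.imI_one, Quaternion.imJ_one, Quaternion.imK_one]
    refine ⟨by nlinarith, by nlinarith, by nlinarith, by nlinarith⟩

lemma sph_re {I : H} (hI : I ∈ Sph) : I.re = 0 := (mem_sph_iff.1 hI).1
lemma sph_normSq {I : H} (hI : I ∈ Sph) : normSq I = 1 := (mem_sph_iff.1 hI).2
lemma sph_mul_self {I : H} (hI : I ∈ Sph) : I * I = -1 := by rw [← sq]; exact hI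
lemma sph_star {I : H} (hI : I ∈ Sph) : star I = -I := by
  ext <;> simp [sph_re hI]
lemma sph_neg {I : H} (hI : I ∈ Sph) : -I ∈ Sph := by
  show (-I)^2 = -1; rw [neg_sq]; exact hI
lemma sph_ne_zero {I : H} (hI : I ∈ Sph) : I ≠ 0 := by
  intro h; have := sph_normSq hI; rw [h] at this; simp at this

-- basis element i is in Sph
lemma sph_nonempty : (⟨0,1,0,0⟩ : H) ∈ Sph := by
  refine mem_sph_iff.2 ?_; erw [Quaternion.normSq_def']; norm_num

lemma sph_norm' {I : H} (hI : I ∈ Sph) : I.imI^2 + I.imJ^2 + I.imK^2 = 1 := by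
  have h := sph_normSq hI
  rw [Quaternion.normSq_def'] at h
  rw [sph_re hI] at h
  nlinarith

lemma mem_slice (I : H) (r s : ℝ) : (r:H) + s • I ∈ Slice I := ⟨r, s, rfl⟩

lemma zero_mem_slice (I : H) : (0:H) ∈ Slice I := ⟨0, 0, by simp⟩

lemma slice_add {I x y : H} (hx : x ∈ Slice I) (hy : y ∈ Slice I) : x + y ∈ Slice I := by
  obtain ⟨a, b, rfl⟩ := hx; obtain ⟨c, d, rfl⟩ := hy
  exact ⟨a + c, b + d, by push_cast; rw [add_smul]; abel⟩

lemma slice_neg {I x : H} (hx : x ∈ Slice I) : -x ∈ Slice I := by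
  obtain ⟨a, b, rfl⟩ := hx; exact ⟨-a, -b, by push_cast; rw [neg_smul]; abel⟩

lemma slice_sub {I x y : H} (hx : x ∈ Slice I) (hy : y ∈ Slice I) : x - y ∈ Slice I := by
  rw [sub_eq_add_neg]; exact slice_add hx (slice_neg hy)

lemma slice_star {I x : H} (hI : I ∈ Sph) (hx : x ∈ Slice I) : star x ∈ Slice I := by
  obtain ⟨a, b, rfl⟩ := hx
  refine ⟨a, -b, ?_⟩
  ext <;> simp [sph_re hI]

lemma slice_mul {I x y : H} (hI : I ∈ Sph) (hx : x ∈ Slice I) (hy : y ∈ Slice I) :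
    x * y ∈ Slice I := by
  obtain ⟨a, b, rfl⟩ := hx; obtain ⟨c, d, rfl⟩ := hy
  have hn := sph_norm' hI
  refine ⟨a*c - b*d, a*d + b*c, ?_⟩
  ext <;> simp [Quaternion.re_mul, Quaternion.imI_mul, Quaternion.imJ_mul, Quaternion.imK_mul,
    sph_re hI] <;> ring_nf <;>
    first
      | rfl
      | (linear_combination (norm := ring_nf) (-(b*d)) * hn)
      | (linear_combination (norm := ring_nf) (b*d) * hn)

lemma slice_comm {I x y : H} (hI : I ∈ Sph) (hx : x ∈ Slice I) (hy : y ∈ Slice I) :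
    x * y = y * x := by
  obtain ⟨a, b, rfl⟩ := hx; obtain ⟨c, d, rfl⟩ := hy
  ext <;> simp [Quaternion.re_mul, Quaternion.imI_mul, Quaternion.imJ_mul, Quaternion.imK_mul] <;>
    ring

lemma slice_mul_I_comm {I x : H} (hx : x ∈ Slice I) : x * I = I * x := by
  obtain ⟨a, b, rfl⟩ := hx
  ext <;> simp [Quaternion.re_mul, Quaternion.imI_mul, Quaternion.imJ_mul, Quaternion.imK_mul] <;>
    ring

lemma sph_anticomm {I J : H} (hI : I ∈ Sph) (hJ : J ∈ Sph) (hO : Orth I J) :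
    J * I = -(I * J) := by
  have hIr := sph_re hI; have hJr := sph_re hJ
  have hO' : I.imI * J.imI + I.imJ * J.imJ + I.imK * J.imK = 0 := by
    have h2 : (I * star J).re = 0 := hO
    simp [Quaternion.re_mul, hIr] at h2
    linarith
  ext <;> simp [Quaternion.re_mul, Quaternion.imI_mul, Quaternion.imJ_mul, Quaternion.imK_mul,
    hIr, hJr] <;> ring_nf <;> linarith [hO']

lemma J_mul_slice {I J x : H} (hI : I ∈ Sph) (hJ : J ∈ Sph) (hO : Orth I J)
    (hx : x ∈ Slice I) : J * x = star x * J := by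
  obtain ⟨a, b, rfl⟩ := hx
  have ha := sph_anticomm hI hJ hO
  have h3 : star ((a:H) + b • I) = (a:H) - b • I := by
    ext <;> simp [sph_re hI]
  rw [h3, mul_add, sub_mul, mul_smul_comm, ha, smul_neg, smul_mul_assoc]
  have h1 : J * (a:H) = (a:H) * J := (Quaternion.coe_commutes a J).symm
  rw [h1]; abel

lemma re_IJ {I J : H} (hJ : J ∈ Sph) (hO : Orth I J) : (I * J).re = 0 := by
  have h2 : (I * star J).re = 0 := hO
  rw [sph_star hJ, mul_neg, Quaternion.re_neg] at h2
  linarith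

lemma re_slice_mul_J {I J x : H} (hI : I ∈ Sph) (hJ : J ∈ Sph) (hO : Orth I J)
    (hx : x ∈ Slice I) : (x * J).re = 0 := by
  obtain ⟨a, b, rfl⟩ := hx
  have h1 := re_IJ hJ hO
  simp [add_mul, smul_mul_assoc, sph_re hJ, h1]

lemma re_slice_mul_JI {I J x : H} (hI : I ∈ Sph) (hJ : J ∈ Sph) (hO : Orth I J)
    (hx : x ∈ Slice I) : (x * (J * I)).re = 0 := by
  rw [sph_anticomm hI hJ hO]
  obtain ⟨a, b, rfl⟩ := hx
  have h1 := re_IJ hJ hO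
  have h2 : ((I * (I * J))).re = 0 := by
    rw [← mul_assoc, sph_mul_self hI, neg_one_mul, Quaternion.re_neg, sph_re hJ, neg_zero]
  simp [add_mul, mul_neg, smul_mul_assoc, h1, h2]

lemma slice_coords {I x : H} (hI : I ∈ Sph) (hx : x ∈ Slice I) :
    x = (x.re : H) + (-(x * I).re) • I := by
  obtain ⟨a, b, rfl⟩ := hx
  have hn := sph_norm' hI
  have hre : ((a:H) + b • I).re = a := by simp [sph_re hI]
  have hmul : ((((a:H) + b • I) * I)).re = -b := by
    simp [add_mul, smul_mul_assoc, sph_re hI, Quaternion.re_mul]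
    linear_combination (-b) * hn
  rw [hre, hmul, neg_neg]

lemma slice_eq_zero {I x : H} (hI : I ∈ Sph) (hx : x ∈ Slice I)
    (h1 : x.re = 0) (h2 : (x * I).re = 0) : x = 0 := by
  have := slice_coords hI hx
  rw [h1, h2] at this
  simpa using this

lemma slice_decomp_unique {I J a b c d : H} (hI : I ∈ Sph) (hJ : J ∈ Sph) (hO : Orth I J)
    (ha : a ∈ Slice I) (hb : b ∈ Slice I) (hc : c ∈ Slice I) (hd : d ∈ Slice I)
    (h : a + b * J = c + d * J) : a = c ∧ b = d := by
  have hx : a - c = (d - b) * J := by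
    have : a - c = d * J - b * J := by
      rw [sub_eq_sub_iff_add_eq_add]; rw [h]; abel
    rw [this, ← sub_mul]
  have hmem : a - c ∈ Slice I := slice_sub ha hc
  have hdb : d - b ∈ Slice I := slice_sub hd hb
  have h1 : (a - c).re = 0 := by rw [hx]; exact re_slice_mul_J hI hJ hO hdb
  have h2 : ((a - c) * I).re = 0 := by
    rw [hx, mul_assoc]; exact re_slice_mul_JI hI hJ hO hdb
  have h3 : a - c = 0 := slice_eq_zero hI hmem h1 h2
  have h4 : (d - b) * J = 0 := by rw [← hx, h3]
  have h5 : d - b = 0 := by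
    rcases mul_eq_zero.1 h4 with h | h
    · exact h
    · exfalso; exact (by intro hh; have := sph_normSq hJ; rw [hh] at this; simp at this : J ≠ 0) h
  exact ⟨sub_eq_zero.1 h3, (sub_eq_zero.1 h5).symm⟩

/-- Existence of an orthogonal imaginary unit. -/
lemma exists_orth (L : H) (hL : L ∈ Sph) : ∃ J ∈ Sph, Orth L J := by
  have hn := sph_norm' hL
  by_cases h : L.imI^2 + L.imJ^2 = 0
  · refine ⟨(⟨0,1,0,0⟩ : H), ?_, ?_⟩
    · erw [mem_sph_iff, Quaternion.normSq_def']
      constructor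
      · rfl
      · norm_num
    · have h1 : L.imI = 0 := by nlinarith [sq_nonneg L.imI, sq_nonneg L.imJ]
      unfold Orth
      rw [Quaternion.re_mul]
      simp [h1, sph_re hL]
      erw [Quaternion.imJ_star, Quaternion.imK_star]; simp
  · set s : ℝ := Real.sqrt (L.imI^2 + L.imJ^2) with hs
    have hspos : 0 < s := Real.sqrt_pos.2 (lt_of_le_of_ne (by positivity) (Ne.symm h))
    have hs2 : s^2 = L.imI^2 + L.imJ^2 := Real.sq_sqrt (by positivity)
    refine ⟨⟨0, -L.imJ/s, L.imI/s, 0⟩, ?_, ?_⟩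
    · erw [mem_sph_iff, Quaternion.normSq_def']
      constructor
      · rfl
      · show (0:ℝ)^2 + (-L.imJ/s)^2 + (L.imI/s)^2 + 0^2 = 1
        field_simp
        linarith [hs2]
    · unfold Orth
      rw [Quaternion.re_mul]
      simp [sph_re hL]
      erw [Quaternion.imI_star, Quaternion.imJ_star, Quaternion.imK_star]
      field_simp
      ring

def projQ (L : H) (q : H) : H := (2⁻¹:ℝ) • (q - L*q*L)
def chi (L : H) (q : H) : ℂ := ⟨q.re, -((q*L).re)⟩

lemma projQ_mem_slice {L : H} (hL : L ∈ Sph) (q : H) : projQ L q ∈ Slice L := by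
  have hn := sph_norm' hL
  have hre := sph_re hL
  refine ⟨q.re, q.imI*L.imI + q.imJ*L.imJ + q.imK*L.imK, ?_⟩
  rw [projQ, Quaternion.ext_iff]
  simp only [Quaternion.re_smul, Quaternion.imI_smul, Quaternion.imJ_smul, Quaternion.imK_smul,
    Quaternion.re_sub, Quaternion.imI_sub, Quaternion.imJ_sub, Quaternion.imK_sub,
    Quaternion.re_add, Quaternion.imI_add, Quaternion.imJ_add, Quaternion.imK_add,
    Quaternion.re_mul, Quaternion.imI_mul, Quaternion.imJ_mul, Quaternion.imK_mul,
    Quaternion.re_coe, Quaternion.imI_coe, Quaternion.imJ_coe, Quaternion.imK_coe,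
    smul_eq_mul, hre]
  refine ⟨?_, ?_, ?_, ?_⟩
  · linear_combination (q.re/2) * hn
  · linear_combination (-q.imI/2) * hn
  · linear_combination (-q.imJ/2) * hn
  · linear_combination (-q.imK/2) * hn

lemma projQ_decomp {L J : H} (hL : L ∈ Sph) (hJ : J ∈ Sph) (hO : Orth L J) (q : H) :
    q = projQ L q + projQ L (-(q*J)) * J := by
  have hL2 := sph_mul_self hL
  have hJ2 := sph_mul_self hJ
  have ha := sph_anticomm hL hJ hO
  rw [projQ, projQ, smul_mul_assoc]
  have key : (-(q*J) - L*(-(q*J))*L) * J = q + L*q*L := by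
    have hJLJ : (J:H) * L * J = L := by
      rw [ha, neg_mul, mul_assoc, hJ2, mul_neg, mul_one, neg_neg]
    have h1 : L * (q * J) * L * J = L * q * L := by
      calc L * (q * J) * L * J = L * (q * (J * L * J)) := by noncomm_ring
        _ = L * (q * L) := by rw [hJLJ]
        _ = L * q * L := by rw [mul_assoc]
    calc (-(q*J) - L*(-(q*J))*L) * J = -(q * (J*J)) + L * (q*J) * L * J := by noncomm_ring
      _ = q + L * q * L := by rw [hJ2, h1]; noncomm_ring
  rw [key]
  module

lemma projQ_Lmul {L : H} (hL : L ∈ Sph) (q : H) : projQ L (L * q) = L * projQ L q := by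
  have hL2 := sph_mul_self hL
  rw [projQ, projQ, mul_smul_comm]
  congr 1
  have : L * (L * q) * L = -(q * L) := by
    calc L * (L * q) * L = (L*L) * q * L := by noncomm_ring
      _ = -(q*L) := by rw [hL2]; noncomm_ring
  rw [this]
  have h2 : L * (L*q*L) = -(q*L) := by
    calc L * (L*q*L) = (L*L) * (q*L) := by noncomm_ring
      _ = -(q*L) := by rw [hL2]; noncomm_ring
  rw [mul_sub, h2]

lemma chi_Lmul {L : H} (hL : L ∈ Sph) (q : H) : chi L (L * q) = Complex.I * chi L q := by
  have hL2 := sph_mul_self hL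
  rw [chi, chi]
  have h1 : (L*q).re = (q*L).re := re_mul_comm L q
  have h2 : ((L*q)*L).re = -q.re := by
    rw [re_mul_comm (L*q) L, ← mul_assoc, hL2]
    simp
  apply Complex.ext <;> simp [h1, h2]

lemma chi_eq_zero {L x : H} (hL : L ∈ Sph) (hx : x ∈ Slice L) (h : chi L x = 0) : x = 0 := by
  have h1 : x.re = 0 := by
    have h' : (chi L x).re = 0 := by rw [h]; rfl
    exact h'
  have h2 : (x*L).re = 0 := by
    have h' : (chi L x).im = 0 := by rw [h]; rfl
    have h'' : -((x*L).re) = 0 := h'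
    linarith
  exact slice_eq_zero hL hx h1 h2

def Tfun (L J : H) (q : H) : ℂ × ℂ := (chi L (projQ L q), chi L (projQ L (-(q*J))))

lemma chi_add (L p q : H) : chi L (p + q) = chi L p + chi L q := by
  apply Complex.ext <;> simp [chi, add_mul] <;> ring

lemma chi_smul (L : H) (r : ℝ) (q : H) : chi L (r • q) = r • chi L q := by
  apply Complex.ext <;> simp [chi, smul_mul_assoc] <;> ring

lemma projQ_add (L p q : H) : projQ L (p + q) = projQ L p + projQ L q := by
  rw [projQ, projQ, projQ, ← smul_add]
  congr 1
  rw [mul_add, add_mul]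
  abel

lemma projQ_smul (L : H) (r : ℝ) (q : H) : projQ L (r • q) = r • projQ L q := by
  rw [projQ, projQ, smul_comm]
  congr 1
  rw [smul_sub, mul_smul_comm, smul_mul_assoc]

lemma Tfun_add (L J : H) (p q : H) : Tfun L J (p + q) = Tfun L J p + Tfun L J q := by
  have h : -((p+q)*J) = -(p*J) + -(q*J) := by rw [add_mul]; abel
  simp only [Tfun, h, projQ_add, chi_add]
  rfl

lemma Tfun_smul (L J : H) (r : ℝ) (q : H) : Tfun L J (r • q) = r • Tfun L J q := by
  have h : -((r • q)*J) = r • (-(q*J)) := by rw [smul_mul_assoc, smul_neg]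
  simp only [Tfun, h, projQ_smul, chi_smul]
  rfl

lemma Tfun_zero_imp {L J : H} (hL : L ∈ Sph) (hJ : J ∈ Sph) (hO : Orth L J) (q : H)
    (h : Tfun L J q = 0) : q = 0 := by
  have h1 : chi L (projQ L q) = 0 := by
    have := congrArg Prod.fst h; simpa [Tfun] using this
  have h2 : chi L (projQ L (-(q*J))) = 0 := by
    have := congrArg Prod.snd h; simpa [Tfun] using this
  have e1 : projQ L q = 0 := chi_eq_zero hL (projQ_mem_slice hL q) h1
  have e2 : projQ L (-(q*J)) = 0 := chi_eq_zero hL (projQ_mem_slice hL _) h2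
  have := projQ_decomp hL hJ hO q
  rw [e1, e2] at this
  simpa using this

lemma Tfun_Lmul {L J : H} (hL : L ∈ Sph) (hJ : J ∈ Sph) (hO : Orth L J) (q : H) :
    Tfun L J (L * q) = Complex.I • Tfun L J q := by
  have : -((L*q)*J) = L * (-(q*J)) := by noncomm_ring
  simp only [Tfun, this, projQ_Lmul hL, chi_Lmul hL]
  refine Prod.ext ?_ ?_ <;> simp [Prod.smul_fst, Prod.smul_snd, smul_eq_mul]

/-- The bundled coordinate map. -/
def TL (L J : H) : H →L[ℝ] ℂ × ℂ :=
  LinearMap.toContinuousLinearMap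
    { toFun := Tfun L J, map_add' := Tfun_add L J, map_smul' := Tfun_smul L J }

lemma TL_apply (L J : H) (q : H) : TL L J q = Tfun L J q := rfl

/-- The slice-coordinate embedding as a CLM. -/
def eSlice (M : H) : (ℝ × ℝ) →L[ℝ] H :=
  LinearMap.toContinuousLinearMap
    { toFun := fun p => (p.1 : H) + p.2 • M
      map_add' := by
        intro p q
        simp only [Prod.fst_add, Prod.snd_add]
        push_cast
        rw [add_smul]
        abel
      map_smul' := by
        intro r p
        simp only [Prod.smul_fst, Prod.smul_snd, smul_eq_mul, RingHom.id_apply]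
        rw [smul_add, Quaternion.smul_coe, smul_smul] }

lemma eSlice_apply (M : H) (p : ℝ × ℝ) : eSlice M p = (p.1 : H) + p.2 • M := rfl

/-- Reflection (x,y) ↦ (x,-y) as a CLM. -/
def sigmaCLM : (ℝ × ℝ) →L[ℝ] (ℝ × ℝ) :=
  (ContinuousLinearMap.fst ℝ ℝ ℝ).prod (-(ContinuousLinearMap.snd ℝ ℝ ℝ))

lemma sigmaCLM_apply (p : ℝ × ℝ) : sigmaCLM p = (p.1, -p.2) := rfl

/-- Left multiplication as a CLM. -/
def mulL (c : H) : H →L[ℝ] H := ContinuousLinearMap.mul ℝ H c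

lemma mulL_apply (c q : H) : mulL c q = c * q := rfl

lemma CR_algebra (L I a' b' c' : H) (hL2 : L*L = -1) (hI2 : I*I = -1) :
    (-(L*a') - (2⁻¹:ℝ) • (-(I*b') + -(I*c')) - (2⁻¹:ℝ) • (L*(I*(-(I*c') - -(I*b')))))
      + L*(a' - (2⁻¹:ℝ) • (b' - c') - (2⁻¹:ℝ) • (L*(I*(-c' - b')))) = 0 := by
  have h1 : I*(-(I*c') - -(I*b')) = c' - b' := by
    rw [mul_sub, mul_neg, mul_neg, ← mul_assoc, ← mul_assoc, hI2]
    simp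
  have h2 : L*(L*(I*(-c' - b'))) = I*c' + I*b' := by
    rw [← mul_assoc, hL2, neg_one_mul, mul_sub, mul_neg]
    simp [mul_add]
    abel
  have h3 : L * (a' - (2⁻¹:ℝ) • (b' - c') - (2⁻¹:ℝ) • (L*(I*(-c' - b'))))
      = L*a' - (2⁻¹:ℝ) • (L*(b' - c')) - (2⁻¹:ℝ) • (I*c' + I*b') := by
    rw [mul_sub, mul_sub, mul_smul_comm, mul_smul_comm, h2]
  rw [h1, h3, mul_sub L c' b', mul_sub L b' c']
  module

lemma rhoCLM_apply (z : ℂ) :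
    (Complex.equivRealProdCLM : ℂ ≃L[ℝ] ℝ × ℝ).toContinuousLinearMap z = (z.re, z.im) := rfl

set_option maxHeartbeats 1000000 in
/-- The Representation Formula. -/
theorem rep_formula (Ω : Set H) (hΩ : IsSymmSliceDomain Ω) (g : H → H) (hg : SliceRegular Ω g)
    {I L : H} (hI : I ∈ Sph) (hL : L ∈ Sph) (x y : ℝ) (hmem : (x:H) + y • I ∈ Ω) :
    g ((x:H) + y • L) = (2⁻¹:ℝ) • (g ((x:H) + y • I) + g ((x:H) + (-y) • I))
      + L * ((2⁻¹:ℝ) • (I * (g ((x:H) + (-y) • I) - g ((x:H) + y • I)))) := by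
  obtain ⟨⟨hopen, _hconn, ⟨qr, hqrΩ, r0, hqreq⟩, hslices⟩, hsymm⟩ := hΩ
  have hL2 := sph_mul_self hL
  have hI2 := sph_mul_self hI
  -- basic symmetry moves
  have move : ∀ (a b : ℝ) (M N : H), M ∈ Sph → N ∈ Sph → (a:H) + b • M ∈ Ω →
      (a:H) + b • N ∈ Ω := fun a b M N hM hN hab => hsymm a b M hM hab N hN
  have moveneg : ∀ (a b : ℝ) (M N : H), M ∈ Sph → N ∈ Sph → (a:H) + b • M ∈ Ω →
      (a:H) + (-b) • N ∈ Ω := by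
    intro a b M N hM hN hab
    have h1 : (a:H) + b • (-N) ∈ Ω := move a b M (-N) hM (sph_neg hN) hab
    have h2 : (a:H) + (-b) • N = (a:H) + b • (-N) := by rw [smul_neg, neg_smul]
    rw [h2]
    exact h1
  set D : Set (ℝ × ℝ) := {p | (p.1:H) + p.2 • L ∈ Ω} with hD
  have hmemD : ∀ p : ℝ × ℝ, p ∈ D → ((p.1:H) + p.2 • I ∈ Ω ∧ (p.1:H) + (-p.2) • I ∈ Ω) := by
    intro p hp
    exact ⟨move p.1 p.2 L I hL hI hp, moveneg p.1 p.2 L I hL hI hp⟩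
  have hDopen : IsOpen D := by
    have : D = (fun p : ℝ × ℝ => eSlice L p) ⁻¹' Ω := rfl
    rw [this]
    exact hopen.preimage (eSlice L).continuous
  have hDconn : IsConnected D := by
    have himg : D = (fun q : H => (q.re, -((q*L).re))) '' (Ω ∩ Slice L) := by
      ext p
      constructor
      · intro hp
        refine ⟨(p.1:H) + p.2 • L, ⟨hp, mem_slice L p.1 p.2⟩, ?_⟩
        have e1 : ((p.1:H) + p.2 • L).re = p.1 := by simp [sph_re hL]
        have e2 : (((p.1:H) + p.2 • L) * L).re = -p.2 := by
          rw [add_mul, smul_mul_assoc, hL2]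
          simp [sph_re hL]
        refine Prod.ext ?_ ?_
        · exact e1
        · show -((((p.1:H) + p.2 • L) * L).re) = p.2
          rw [e2, neg_neg]
      · rintro ⟨q, ⟨hqΩ, a, b, rfl⟩, rfl⟩
        have e1 : ((a:H) + b • L).re = a := by simp [sph_re hL]
        have e2 : (((a:H) + b • L) * L).re = -b := by
          rw [add_mul, smul_mul_assoc, hL2]
          simp [sph_re hL]
        show ((((a:H) + b • L).re :H)) + (-((((a:H) + b • L) * L).re)) • L ∈ Ω
        rw [e1, e2, neg_neg]
        exact hqΩ
    rw [himg]
    refine (hslices L hL).image _ ?_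
    apply Continuous.continuousOn
    refine Continuous.prodMk ?_ ?_
    · exact Quaternion.continuous_re
    · exact (Quaternion.continuous_re.comp (continuous_mul_right L)).neg
  -- the competitor function
  set vL : ℝ × ℝ → H := fun p => g ((p.1:H) + p.2 • L) with hvL
  set vI : ℝ × ℝ → H := fun p => g ((p.1:H) + p.2 • I) with hvI
  set vI' : ℝ × ℝ → H := fun p => g ((p.1:H) + (-p.2) • I) with hvI'
  set Φ : ℝ × ℝ → H := fun p =>
    vL p - (2⁻¹:ℝ) • (vI p + vI' p) - (2⁻¹:ℝ) • (L * (I * (vI' p - vI p))) with hΦ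
  have hvI'eq : vI' = vI ∘ sigmaCLM := by
    funext p
    rfl
  -- CR property of Φ on D
  have hCR : ∀ p : ℝ × ℝ, p ∈ D → ∃ 𝒟 : (ℝ × ℝ) →L[ℝ] H, HasFDerivAt Φ 𝒟 p ∧
      𝒟 (1,0) + L * 𝒟 (0,1) = 0 := by
    rintro ⟨p₁, p₂⟩ hp
    obtain ⟨hmI, hmI'⟩ := hmemD _ hp
    obtain ⟨hdL, hcrL⟩ := hg L hL p₁ p₂ hp
    obtain ⟨hdI, hcrI⟩ := hg I hI p₁ p₂ hmI
    obtain ⟨hdI', hcrI'⟩ := hg I hI p₁ (-p₂) hmI'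
    set A := fderiv ℝ vL (p₁, p₂) with hA
    set B := fderiv ℝ vI (p₁, p₂) with hB
    set C := fderiv ℝ vI (p₁, -p₂) with hC
    have hdLa : HasFDerivAt vL A (p₁, p₂) := hdL.hasFDerivAt
    have hdIa : HasFDerivAt vI B (p₁, p₂) := hdI.hasFDerivAt
    have hdI'a : HasFDerivAt vI' (C.comp sigmaCLM) (p₁, p₂) := by
      rw [hvI'eq]
      have hσ : HasFDerivAt (fun q : ℝ × ℝ => sigmaCLM q) sigmaCLM (p₁, p₂) :=
        sigmaCLM.hasFDerivAt
      have : sigmaCLM (p₁, p₂) = (p₁, -p₂) := rfl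
      have hC' : HasFDerivAt vI C (sigmaCLM (p₁, p₂)) := by rw [this]; exact hdI'.hasFDerivAt
      exact hC'.comp (p₁, p₂) hσ
    set C' := C.comp sigmaCLM with hC'
    have hstep : HasFDerivAt Φ
        (A - (2⁻¹:ℝ) • (B + C') - (2⁻¹:ℝ) • ((mulL L).comp ((mulL I).comp (C' - B))))
        (p₁, p₂) := by
      have t1 : HasFDerivAt (fun p => vI p + vI' p) (B + C') (p₁, p₂) := hdIa.add hdI'a
      have t2 : HasFDerivAt (fun p => (2⁻¹:ℝ) • (vI p + vI' p)) ((2⁻¹:ℝ) • (B + C'))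
          (p₁, p₂) := t1.const_smul (2⁻¹:ℝ)
      have t3 : HasFDerivAt (fun p => vI' p - vI p) (C' - B) (p₁, p₂) := hdI'a.sub hdIa
      have t4 : HasFDerivAt (fun p => I * (vI' p - vI p)) ((mulL I).comp (C' - B))
          (p₁, p₂) := (mulL I).hasFDerivAt.comp (p₁, p₂) t3
      have t5 : HasFDerivAt (fun p => L * (I * (vI' p - vI p)))
          ((mulL L).comp ((mulL I).comp (C' - B))) (p₁, p₂) :=
        (mulL L).hasFDerivAt.comp (p₁, p₂) t4
      have t6 : HasFDerivAt (fun p => (2⁻¹:ℝ) • (L * (I * (vI' p - vI p))))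
          ((2⁻¹:ℝ) • ((mulL L).comp ((mulL I).comp (C' - B)))) (p₁, p₂) :=
        t5.const_smul (2⁻¹:ℝ)
      exact (hdLa.sub t2).sub t6
    refine ⟨_, hstep, ?_⟩
    have e10 : C' ((1:ℝ), (0:ℝ)) = C ((1:ℝ), (0:ℝ)) := by
      rw [hC', ContinuousLinearMap.comp_apply]
      congr 1
      rw [sigmaCLM_apply]
      norm_num
    have e01 : C' ((0:ℝ), (1:ℝ)) = -(C ((0:ℝ), (1:ℝ))) := by
      rw [hC', ContinuousLinearMap.comp_apply]
      have h1 : sigmaCLM ((0:ℝ), (1:ℝ)) = -((0:ℝ),(1:ℝ)) := by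
        rw [sigmaCLM_apply]
        norm_num
      rw [h1, map_neg]
    have ra : A (1,0) = -(L * A (0,1)) := by
      linear_combination (norm := module) hcrL
    have rb : B (1,0) = -(I * B (0,1)) := by
      linear_combination (norm := module) hcrI
    have rc : C (1,0) = -(I * C (0,1)) := by
      linear_combination (norm := module) hcrI'
    simp only [ContinuousLinearMap.sub_apply, ContinuousLinearMap.add_apply,
      ContinuousLinearMap.smul_apply, ContinuousLinearMap.comp_apply, mulL_apply,
      e10, e01, ra, rb, rc]
    exact CR_algebra L I (A (0,1)) (B (0,1)) (C (0,1)) hL2 hI2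
  -- transport to ℂ
  obtain ⟨J, hJ, hOJ⟩ := exists_orth L hL
  set T := TL L J with hT
  set U : Set ℂ := {z | (z.re, z.im) ∈ D} with hU
  set ψ : ℂ → ℂ × ℂ := fun z => T (Φ (z.re, z.im)) with hψ
  have hρ : ∀ z : ℂ, Complex.equivRealProdCLM z = (z.re, z.im) := fun z => rfl
  have hUopen : IsOpen U := by
    have : U = (fun z : ℂ => Complex.equivRealProdCLM z) ⁻¹' D := rfl
    rw [this]
    exact hDopen.preimage Complex.equivRealProdCLM.continuous
  have hUconn : IsConnected U := by
    have himg : U = (fun p : ℝ × ℝ => Complex.equivRealProdCLM.symm p) '' D := by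
      ext z
      constructor
      · intro hz
        refine ⟨(z.re, z.im), hz, ?_⟩
        exact Complex.equivRealProdCLM.symm_apply_apply z
      · rintro ⟨p, hp, rfl⟩
        show ((Complex.equivRealProdCLM.symm p).re, (Complex.equivRealProdCLM.symm p).im) ∈ D
        rw [show ((Complex.equivRealProdCLM.symm p).re, (Complex.equivRealProdCLM.symm p).im) = p
          from Complex.equivRealProdCLM.apply_symm_apply p]
        exact hp
    rw [himg]
    exact hDconn.image _ Complex.equivRealProdCLM.symm.continuous.continuousOn
  have hψdiff : DifferentiableOn ℂ ψ U := by
    intro z hz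
    obtain ⟨𝒟, h𝒟, hcr⟩ := hCR (z.re, z.im) hz
    have hcomp : HasFDerivAt ψ ((T.comp 𝒟).comp
        (Complex.equivRealProdCLM : ℂ ≃L[ℝ] ℝ × ℝ).toContinuousLinearMap) z := by
      have h1 : HasFDerivAt (fun z : ℂ => (z.re, z.im))
          (Complex.equivRealProdCLM : ℂ ≃L[ℝ] ℝ × ℝ).toContinuousLinearMap z :=
        (Complex.equivRealProdCLM : ℂ ≃L[ℝ] ℝ × ℝ).toContinuousLinearMap.hasFDerivAt
      have h2 : HasFDerivAt Φ 𝒟 ((fun z : ℂ => (z.re, z.im)) z) := h𝒟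
      have h3 := (T.hasFDerivAt.comp _ h2).comp z h1
      exact h3
    set m := (T.comp 𝒟).comp
        (Complex.equivRealProdCLM : ℂ ≃L[ℝ] ℝ × ℝ).toContinuousLinearMap with hm
    have hm1 : m 1 = T (𝒟 (1, 0)) := by
      rw [hm, ContinuousLinearMap.comp_apply, ContinuousLinearMap.comp_apply, rhoCLM_apply]
      norm_num
    have hmi : m Complex.I = T (𝒟 (0, 1)) := by
      rw [hm, ContinuousLinearMap.comp_apply, ContinuousLinearMap.comp_apply, rhoCLM_apply]
      rw [Complex.I_re, Complex.I_im]
    have hLD : 𝒟 (0,1) = L * 𝒟 (1,0) := by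
      have h4 : L * (𝒟 (1,0) + L * 𝒟 (0,1)) = 0 := by rw [hcr, mul_zero]
      rw [mul_add, ← mul_assoc, hL2, neg_one_mul] at h4
      linear_combination (norm := module) -h4
    have hmiI : m Complex.I = Complex.I • m 1 := by
      rw [hmi, hm1, hLD]
      exact Tfun_Lmul hL hJ hOJ (𝒟 (1,0))
    set g' : ℂ →L[ℂ] ℂ × ℂ := (1 : ℂ →L[ℂ] ℂ).smulRight (m 1) with hg'
    have hrestrict : g'.restrictScalars ℝ = m := by
      apply ContinuousLinearMap.ext
      intro w
      have hw : w = (w.re : ℂ) + w.im • Complex.I := by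
        rw [Complex.real_smul]
        exact (Complex.re_add_im w).symm
      have e1 : g'.restrictScalars ℝ w = w • m 1 := by
        simp [hg', ContinuousLinearMap.smulRight_apply]
      have h1C : ((w.re:ℂ)) = w.re • (1:ℂ) := by rw [Complex.real_smul, mul_one]
      calc (g'.restrictScalars ℝ) w = w • m 1 := e1
        _ = ((w.re:ℂ) + w.im • Complex.I) • m 1 := by rw [← hw]
        _ = ((w.re:ℂ)) • m 1 + (w.im • Complex.I) • m 1 := add_smul _ _ _
        _ = w.re • ((1:ℂ) • m 1) + w.im • (Complex.I • m 1) := by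
            rw [h1C, smul_assoc, smul_assoc]
        _ = w.re • m 1 + w.im • m Complex.I := by rw [one_smul, hmiI]
        _ = m ((w.re:ℂ)) + m (w.im • Complex.I) := by
            rw [map_smul, h1C, map_smul]
        _ = m ((w.re:ℂ) + w.im • Complex.I) := (map_add m _ _).symm
        _ = m w := by rw [← hw]
    have : HasFDerivAt ψ g' z := hasFDerivAt_of_restrictScalars ℝ hcomp hrestrict
    exact this.differentiableAt.differentiableWithinAt
  -- zero on the reals
  have hψreal : ∀ r : ℝ, ψ ((r:ℂ)) = 0 := by
    intro r
    have hz : Φ (r, 0) = 0 := by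
      have e0 : ((r:H) + (0:ℝ) • L) = (r:H) := by simp
      have e1 : ((r:H) + (0:ℝ) • I) = (r:H) := by simp
      have e2 : ((r:H) + (-(0:ℝ)) • I) = (r:H) := by simp
      show vL (r,0) - (2⁻¹:ℝ) • (vI (r,0) + vI' (r,0))
          - (2⁻¹:ℝ) • (L * (I * (vI' (r,0) - vI (r,0)))) = 0
      have hvL0 : vL (r, 0) = g (r:H) := by rw [hvL]; simp
      have hvI0 : vI (r, 0) = g (r:H) := by rw [hvI]; simp
      have hvI'0 : vI' (r, 0) = g (r:H) := by rw [hvI']; simp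
      rw [hvL0, hvI0, hvI'0]
      rw [sub_self, mul_zero, mul_zero, smul_zero]
      rw [← two_smul ℝ (g (r:H)), smul_smul]
      norm_num
    show T (Φ (((r:ℂ)).re, ((r:ℂ)).im)) = 0
    have : (((r:ℂ)).re, ((r:ℂ)).im) = ((r:ℝ), (0:ℝ)) := by simp
    rw [this, hz, map_zero]
  -- the accumulation point
  set z₀ : ℂ := (r0 : ℂ) with hz₀
  have hz₀U : z₀ ∈ U := by
    show ((z₀.re : H)) + z₀.im • L ∈ Ω
    have : z₀.re = r0 ∧ z₀.im = 0 := by constructor <;> simp [hz₀]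
    rw [this.1, this.2]
    simp only [zero_smul, add_zero]
    rw [← hqreq]
    exact hqrΩ
  have hfreq : ∃ᶠ z in nhdsWithin z₀ {z | z ≠ z₀}, ψ z = 0 := by
    rw [Filter.frequently_iff]
    intro s hs
    rw [mem_nhdsWithin] at hs
    obtain ⟨t, ht, hz₀t, hts⟩ := hs
    obtain ⟨ε, hε, hball⟩ := Metric.isOpen_iff.1 ht z₀ hz₀t
    refine ⟨z₀ + ((ε/2 : ℝ):ℂ), hts ⟨hball ?_, ?_⟩, ?_⟩
    · rw [Metric.mem_ball, Complex.dist_eq]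
      simp only [add_sub_cancel_left]
      rw [Complex.norm_real, Real.norm_eq_abs]
      rw [abs_of_pos (by linarith)]
      linarith
    · show z₀ + ((ε/2 : ℝ):ℂ) ≠ z₀
      intro hcon
      have : ((ε/2 : ℝ):ℂ) = 0 := by
        have := congrArg (fun w => w - z₀) hcon
        simpa using this
      rw [Complex.ofReal_eq_zero] at this
      linarith
    · have : z₀ + ((ε/2 : ℝ):ℂ) = ((r0 + ε/2 : ℝ) : ℂ) := by push_cast [hz₀]; ring
      rw [this]
      exact hψreal _
  have heq : Set.EqOn ψ 0 U :=
    ((hψdiff.analyticOnNhd hUopen).eqOn_zero_of_preconnected_of_frequently_eq_zero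
      hUconn.isPreconnected hz₀U hfreq)
  -- conclude
  have hzU : (⟨x, y⟩ : ℂ) ∈ U := by
    show ((x:H)) + y • L ∈ Ω
    exact move x y I L hI hL hmem
  have hΦ0 : Φ (x, y) = 0 := by
    have h6 := heq hzU
    have h7 : T (Φ (x, y)) = 0 := h6
    rw [hT, TL_apply] at h7
    exact Tfun_zero_imp hL hJ hOJ _ h7
  have : vL (x,y) - (2⁻¹:ℝ) • (vI (x,y) + vI' (x,y))
      - (2⁻¹:ℝ) • (L * (I * (vI' (x,y) - vI (x,y)))) = 0 := hΦ0
  have hfinal : vL (x,y) = (2⁻¹:ℝ) • (vI (x,y) + vI' (x,y))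
      + (2⁻¹:ℝ) • (L * (I * (vI' (x,y) - vI (x,y)))) := by
    linear_combination (norm := module) this
  show vL (x,y) = (2⁻¹:ℝ) • (vI (x,y) + vI' (x,y))
      + L * ((2⁻¹:ℝ) • (I * (vI' (x,y) - vI (x,y))))
  rw [hfinal, mul_smul_comm]

lemma star_slice_mul_J {I J x : H} (hI : I ∈ Sph) (hJ : J ∈ Sph) (hO : Orth I J)
    (hx : x ∈ Slice I) : star (x * J) = -(x * J) := by
  rw [star_mul, sph_star hJ, neg_mul, J_mul_slice hI hJ hO (slice_star hI hx), star_star]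

lemma IxI {I x : H} (hI : I ∈ Sph) (hx : x ∈ Slice I) : I * x * I = -x := by
  rw [← slice_mul_I_comm hx, mul_assoc, sph_mul_self hI, mul_neg, mul_one]

lemma IJI {I J : H} (hI : I ∈ Sph) (hJ : J ∈ Sph) (hO : Orth I J) : I * J * I = J := by
  rw [mul_assoc, sph_anticomm hI hJ hO, mul_neg, ← mul_assoc, sph_mul_self hI, neg_one_mul,
    neg_neg]

lemma IxJI {I J x : H} (hI : I ∈ Sph) (hJ : J ∈ Sph) (hO : Orth I J) (hx : x ∈ Slice I) :
    I * (x * J) * I = x * J := by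
  have h1 : I * (x * J) = x * (I * J) := by
    rw [← mul_assoc, ← slice_mul_I_comm hx, mul_assoc]
  rw [h1, mul_assoc, mul_assoc, ← mul_assoc I J I, IJI hI hJ hO]

lemma mul_re_coe (r : ℝ) (w : H) : ((r:H) * w).re = r * w.re := by
  rw [Quaternion.coe_mul_eq_smul]
  simp

/-- The conjugate-values lemma. -/
lemma conj_vals {I J α β a b c d : H} (hI : I ∈ Sph) (hJ : J ∈ Sph) (hO : Orth I J)
    (ha : a ∈ Slice I) (hb : b ∈ Slice I) (hc : c ∈ Slice I) (hd : d ∈ Slice I)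
    (hu : α + I*β = a + b*J) (hv : α - I*β = c + d*J) :
    star α + I * star β = star c - b*J ∧ star α - I * star β = star a - d*J := by
  have hI2 := sph_mul_self hI
  have hsu : star (a + b*J) = star a - b*J := by
    rw [star_add, star_slice_mul_J hI hJ hO hb, ← sub_eq_add_neg]
  have hsv : star (c + d*J) = star c - d*J := by
    rw [star_add, star_slice_mul_J hI hJ hO hd, ← sub_eq_add_neg]
  have hsα : star α = (2⁻¹:ℝ) • ((star a - b*J) + (star c - d*J)) := by
    have h0 : (2:ℝ) • α = (a + b*J) + (c + d*J) := by
      linear_combination (norm := module) hu + hv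
    have h1 : star ((2:ℝ) • α) = star ((a + b*J) + (c + d*J)) := by rw [h0]
    rw [Quaternion.star_smul, star_add, hsu, hsv] at h1
    rw [← h1, smul_smul]
    norm_num
  have h2' : (2:ℝ) • (I*β) = (a + b*J) - (c + d*J) := by
    linear_combination (norm := module) hu - hv
  have hsIβ : star (I*β) = (2⁻¹:ℝ) • ((star a - star c) + (d - b)*J) := by
    have h1 : star ((2:ℝ) • (I*β)) = star ((a + b*J) - (c + d*J)) := by rw [h2']
    rw [Quaternion.star_smul, star_sub, hsu, hsv] at h1
    have hX : star (I*β) = (2⁻¹:ℝ) • ((star a - b*J) - (star c - d*J)) := by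
      rw [← h1, smul_smul]
      norm_num
    rw [hX, sub_mul]
    module
  have hsβI : star β * I = -(star (I * β)) := by
    rw [star_mul, sph_star hI, mul_neg, neg_neg]
  have hsβ : star β = star (I*β) * I := by
    have h1 := congrArg (fun z => z * I) hsβI
    simp only [mul_assoc, hI2, neg_mul] at h1
    have h2 : star β * -1 = -(star β) := by rw [mul_neg_one]
    rw [h2] at h1
    linear_combination (norm := module) -h1
  have hIsβ : I * star β = (2⁻¹:ℝ) • (-(star a - star c) + (d - b)*J) := by
    rw [hsβ, hsIβ]
    rw [smul_mul_assoc, mul_smul_comm]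
    congr 1
    have hx : star a - star c ∈ Slice I := slice_sub (slice_star hI ha) (slice_star hI hc)
    have hy : d - b ∈ Slice I := slice_sub hd hb
    rw [add_mul, mul_add]
    rw [show I * ((star a - star c) * I) = I * (star a - star c) * I from (mul_assoc _ _ _).symm]
    rw [show I * ((d-b)*J*I) = I * ((d-b)*J) * I from (mul_assoc _ _ _).symm]
    rw [IxI hI hx, IxJI hI hJ hO hy]
  constructor
  · rw [hsα, hIsβ, sub_mul]
    module
  · rw [hsα, hIsβ, sub_mul]
    module

/-- Solvability of α + Lβ = 0 over the sphere. -/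
lemma exists_sph_sol {α β : H} :
    (∃ L ∈ Sph, α + L*β = 0) ↔ (normSq α = normSq β ∧ (α * star β).re = 0) := by
  constructor
  · rintro ⟨L, hL, heq⟩
    have hα : α = -(L*β) := by linear_combination (norm := module) heq
    constructor
    · rw [hα, Quaternion.normSq_neg, map_mul, sph_normSq hL, one_mul]
    · rw [hα, neg_mul, Quaternion.re_neg, mul_assoc, Quaternion.self_mul_star]
      rw [re_mul_comm, mul_re_coe, sph_re hL, mul_zero, neg_zero]
  · rintro ⟨h1, h2⟩
    by_cases hβ : β = 0
    · have hα : α = 0 := by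
        have h3 : normSq α = 0 := by rw [h1, hβ, map_zero]
        exact Quaternion.normSq_eq_zero.1 h3
      exact ⟨(⟨0,1,0,0⟩:H), sph_nonempty, by erw [hα, hβ, mul_zero, add_zero]⟩
    · have hn : normSq β ≠ 0 := Quaternion.normSq_ne_zero.2 hβ
      set L : H := -((((normSq β)⁻¹ : ℝ) : H) * (α * star β)) with hLdef
      have hLre : L.re = 0 := by
        rw [hLdef, Quaternion.re_neg, mul_re_coe, h2, mul_zero, neg_zero]
      have hLn : normSq L = 1 := by
        rw [hLdef, Quaternion.normSq_neg, map_mul, map_mul, Quaternion.normSq_coe,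
          Quaternion.normSq_star, h1]
        field_simp
      refine ⟨L, mem_sph_iff.2 ⟨hLre, hLn⟩, ?_⟩
      have hkey : L * β = -α := by
        rw [hLdef, neg_mul, mul_assoc, mul_assoc, Quaternion.star_mul_self,
          Quaternion.mul_coe_eq_smul]
        rw [Quaternion.coe_mul_eq_smul, smul_smul]
        rw [inv_mul_cancel₀ hn, one_smul]
      rw [hkey, add_neg_cancel]

/-- The re-invariants. -/
lemma re_uv {I α β : H} (hI : I ∈ Sph) :
    ((α + I*β) * star (α - I*β)).re = normSq α - normSq β := by
  have hI2 := sph_mul_self hI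
  have hsv : star (α - I*β) = star α + star β * I := by
    rw [star_sub, star_mul, sph_star hI, mul_neg, sub_neg_eq_add]
  rw [hsv, mul_add, add_mul, add_mul]
  simp only [Quaternion.re_add]
  have t1 : (α * star α).re = normSq α := by
    rw [Quaternion.self_mul_star]; simp
  have e2 : I * (↑(normSq β) : H) * I = -(↑(normSq β) : H) := by
    rw [← Quaternion.coe_commutes, mul_assoc, hI2, mul_neg_one]
  have t4 : (I*β * (star β * I)).re = -(normSq β) := by
    have e : I*β * (star β * I) = I * (↑(normSq β) : H) * I := by
      rw [mul_assoc, ← mul_assoc β (star β) I, Quaternion.self_mul_star, ← mul_assoc]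
    rw [e, e2, Quaternion.re_neg, Quaternion.re_coe]
  have t23 : (α * (star β * I)).re + (I*β * star α).re = 0 := by
    have e1 : (α * (star β * I)).re = ((α * star β) * I).re := by rw [mul_assoc]
    have e2 : (I*β * star α).re = ((β * star α) * I).re := by
      rw [mul_assoc, re_mul_comm]
    have e3 : α * star β + β * star α = ((2 * (α * star β).re : ℝ) : H) := by
      have : β * star α = star (α * star β) := by rw [star_mul, star_star]
      rw [this, Quaternion.self_add_star']
    have e4 : ((α * star β) * I).re + ((β * star α) * I).re
        = ((α * star β + β * star α) * I).re := by
      rw [add_mul, Quaternion.re_add]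
    rw [e1, e2, e4, e3, mul_re_coe, sph_re hI, mul_zero]
  rw [t1, t4]
  linarith [t23]

lemma re_uvI {I α β : H} (hI : I ∈ Sph) :
    (((α + I*β) * star (α - I*β)) * I).re = -(2*(α * star β).re) := by
  have hI2 := sph_mul_self hI
  have hsv : star (α - I*β) = star α + star β * I := by
    rw [star_sub, star_mul, sph_star hI, mul_neg, sub_neg_eq_add]
  rw [hsv, mul_add, add_mul, add_mul, add_mul, add_mul, add_mul]
  simp only [Quaternion.re_add]
  have t1 : ((α * star α) * I).re = 0 := by
    rw [Quaternion.self_mul_star, mul_re_coe, sph_re hI, mul_zero]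
  have t2 : ((α * (star β * I)) * I).re = -((α * star β).re) := by
    rw [mul_assoc, mul_assoc, hI2, mul_neg_one, mul_neg, Quaternion.re_neg]
  have t3 : (((I*β) * star α) * I).re = -((α * star β).re) := by
    have e1 : ((I*β) * star α) * I = I * ((β * star α) * I) := by
      rw [mul_assoc, mul_assoc, mul_assoc]
    rw [e1, re_mul_comm]
    rw [mul_assoc, hI2, mul_neg_one, Quaternion.re_neg]
    have : (β * star α).re = (α * star β).re := by
      have h : β * star α = star (α * star β) := by rw [star_mul, star_star]
      rw [h, Quaternion.re_star]
    rw [this]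
  have t4 : (((I*β) * (star β * I)) * I).re = 0 := by
    have e : (I*β) * (star β * I) = I * (↑(normSq β) : H) * I := by
      rw [mul_assoc, ← mul_assoc β (star β) I, Quaternion.self_mul_star, ← mul_assoc]
    have e2 : I * (↑(normSq β) : H) * I = -(↑(normSq β) : H) := by
      rw [← Quaternion.coe_commutes, mul_assoc, hI2, mul_neg_one]
    rw [e, e2, neg_mul, Quaternion.re_neg, mul_re_coe, sph_re hI, mul_zero, neg_zero]
  rw [t1, t2, t3, t4]
  ring

/-- Decomposition of the product u * star v. -/
lemma uv_decomp {I J a b c d : H} (hI : I ∈ Sph) (hJ : J ∈ Sph) (hO : Orth I J)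
    (hc : c ∈ Slice I) (hd : d ∈ Slice I) :
    (a + b*J) * star (c + d*J) = (a * star c + b * star d) + (b*c - a*d)*J := by
  have hsv : star (c + d*J) = star c - d*J := by
    rw [star_add, star_slice_mul_J hI hJ hO hd, ← sub_eq_add_neg]
  have h1 : b*J*(star c) = (b*c)*J := by
    rw [mul_assoc, J_mul_slice hI hJ hO (slice_star hI hc), star_star, ← mul_assoc]
  have h2 : b*J*(d*J) = -(b*star d) := by
    rw [mul_assoc, ← mul_assoc J d J, J_mul_slice hI hJ hO hd, mul_assoc (star d) J J,
      sph_mul_self hJ, mul_neg_one, mul_neg]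
  rw [hsv, add_mul, mul_sub, mul_sub, h1, h2, sub_mul, ← mul_assoc]
  module

/-- zeros over the sphere in terms of slice components. -/
lemma zero_char {I J α β a b c d : H} (hI : I ∈ Sph) (hJ : J ∈ Sph) (hO : Orth I J)
    (ha : a ∈ Slice I) (hb : b ∈ Slice I) (hc : c ∈ Slice I) (hd : d ∈ Slice I)
    (hu : α + I*β = a + b*J) (hv : α - I*β = c + d*J) :
    (∃ L ∈ Sph, α + L*β = 0) ↔ a * star c + b * star d = 0 := by
  rw [exists_sph_sol]
  have hwmem : a * star c + b * star d ∈ Slice I :=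
    slice_add (slice_mul hI ha (slice_star hI hc)) (slice_mul hI hb (slice_star hI hd))
  have hemem : b*c - a*d ∈ Slice I := slice_sub (slice_mul hI hb hc) (slice_mul hI ha hd)
  have he : (α + I*β) * star (α - I*β) = (a * star c + b * star d) + (b*c - a*d)*J := by
    rw [hu, hv, uv_decomp hI hJ hO hc hd]
  have h1 : normSq α - normSq β = (a * star c + b * star d).re := by
    rw [← re_uv hI, he, Quaternion.re_add, re_slice_mul_J hI hJ hO hemem, add_zero]
  have h2 : -(2*((α * star β).re)) = ((a * star c + b * star d) * I).re := by
    rw [← re_uvI hI, he, add_mul, Quaternion.re_add, mul_assoc,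
      re_slice_mul_JI hI hJ hO hemem, add_zero]
  constructor
  · rintro ⟨hA, hB⟩
    apply slice_eq_zero hI hwmem
    · rw [← h1, hA, sub_self]
    · rw [← h2, hB]; ring
  · intro hw0
    constructor
    · have : (a * star c + b * star d).re = 0 := by rw [hw0]; simp
      rw [this] at h1
      linarith [h1]
    · have : ((a * star c + b * star d) * I).re = 0 := by rw [hw0, zero_mul]; simp
      rw [this] at h2
      linarith [h2]

lemma star_pt {M : H} (hM : M ∈ Sph) (x y : ℝ) :
    star ((x:H) + y • M) = (x:H) + (-y) • M := by
  ext <;> simp [sph_re hM]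

lemma neg_pt (x y : ℝ) (M : H) : (x:H) + y • (-M) = (x:H) + (-y) • M := by
  rw [smul_neg, neg_smul]

lemma ab_u {I u v : H} (hI2 : I * I = -1) :
    (2⁻¹:ℝ) • (u + v) + I * ((2⁻¹:ℝ) • (I * (v - u))) = u := by
  rw [mul_smul_comm, ← mul_assoc, hI2, neg_one_mul]
  module

lemma ab_v {I u v : H} (hI2 : I * I = -1) :
    (2⁻¹:ℝ) • (u + v) - I * ((2⁻¹:ℝ) • (I * (v - u))) = v := by
  rw [mul_smul_comm, ← mul_assoc, hI2, neg_one_mul]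
  module

lemma rep_eval1 {I α β : H} (hI2 : I * I = -1) :
    (2⁻¹:ℝ) • ((α + I*β) + (α - I*β)) = α := by module

lemma rep_eval2 {I α β : H} (hI2 : I * I = -1) :
    (2⁻¹:ℝ) • (I * ((α - I*β) - (α + I*β))) = β := by
  have h : (α - I*β) - (α + I*β) = (-2:ℝ) • (I*β) := by module
  rw [h, mul_smul_comm, ← mul_assoc, hI2, neg_one_mul]
  module


end Aux

/-- on a sphere `S₀ = x₀ + y₀𝕊 ⊂ Ω`: `f` has a zero in `S₀`
iff `f^c` has a zero in `S₀`, iff `f^s` has a zero in `S₀`, iff `f^s`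
vanishes identically on `S₀`. -/
theorem zeros_of_conjugate_and_symmetrization (Ω : Set H) (hΩ : IsSymmSliceDomain Ω)
    (f fc fs : H → H) (hf : SliceRegular Ω f)
    (hfc : IsRegularConj Ω f fc) (hfs : IsRegularProduct Ω f fc fs)
    (x₀ y₀ : ℝ) (hs : sphSet x₀ y₀ ⊆ Ω) :
    ((∃ q ∈ sphSet x₀ y₀, f q = 0) ↔ (∃ q ∈ sphSet x₀ y₀, fc q = 0)) ∧
    ((∃ q ∈ sphSet x₀ y₀, f q = 0) ↔ (∃ q ∈ sphSet x₀ y₀, fs q = 0)) ∧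
    ((∃ q ∈ sphSet x₀ y₀, f q = 0) ↔ (∀ q ∈ sphSet x₀ y₀, fs q = 0)) := by
  obtain ⟨hfcreg, I₁, hI₁, J₁, hJ₁, hO₁, F, G, hsp1, hfc_eq⟩ := hfc
  obtain ⟨hfsreg, I₂, hI₂, J₂, hJ₂, hO₂, F₁, G₁, F₁', G₁', hspf, hspc, hfs_eq⟩ := hfs
  have hI₁2 := sph_mul_self hI₁
  have hI₂2 := sph_mul_self hI₂
  set z2 : H := (x₀:H) + y₀ • I₂ with hz2def
  set z2' : H := (x₀:H) + (-y₀) • I₂ with hz2'def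
  set z1 : H := (x₀:H) + y₀ • I₁ with hz1def
  set z1' : H := (x₀:H) + (-y₀) • I₁ with hz1'def
  have hz2sph : z2 ∈ sphSet x₀ y₀ := ⟨I₂, hI₂, rfl⟩
  have hz2'sph : z2' ∈ sphSet x₀ y₀ := ⟨-I₂, sph_neg hI₂, (neg_pt x₀ y₀ I₂).symm⟩
  have hz1sph : z1 ∈ sphSet x₀ y₀ := ⟨I₁, hI₁, rfl⟩
  have hz1'sph : z1' ∈ sphSet x₀ y₀ := ⟨-I₁, sph_neg hI₁, (neg_pt x₀ y₀ I₁).symm⟩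
  have hm2 : z2 ∈ Ω ∩ Slice I₂ := ⟨hs hz2sph, mem_slice I₂ x₀ y₀⟩
  have hm2' : z2' ∈ Ω ∩ Slice I₂ := ⟨hs hz2'sph, mem_slice I₂ x₀ (-y₀)⟩
  have hm1 : z1 ∈ Ω ∩ Slice I₁ := ⟨hs hz1sph, mem_slice I₁ x₀ y₀⟩
  have hm1' : z1' ∈ Ω ∩ Slice I₁ := ⟨hs hz1'sph, mem_slice I₁ x₀ (-y₀)⟩
  have hstarz2 : star z2 = z2' := star_pt hI₂ x₀ y₀
  have hstarz2' : star z2' = z2 := by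
    rw [hz2'def, star_pt hI₂ x₀ (-y₀), neg_neg]
  have hstarz1 : star z1 = z1' := star_pt hI₁ x₀ y₀
  have hstarz1' : star z1' = z1 := by
    rw [hz1'def, star_pt hI₁ x₀ (-y₀), neg_neg]
  -- representation for f, base slice I₂
  set αf : H := (2⁻¹:ℝ) • (f z2 + f z2') with hαf
  set βf : H := (2⁻¹:ℝ) • (I₂ * (f z2' - f z2)) with hβf
  have hrepf : ∀ L ∈ Sph, f ((x₀:H) + y₀ • L) = αf + L * βf := by
    intro L hL
    exact rep_formula Ω hΩ f hf hI₂ hL x₀ y₀ hm2.1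
  -- slice I₁ values of f
  have hu1 : αf + I₁ * βf = F z1 + G z1 * J₁ := by
    rw [← hrepf I₁ hI₁]
    exact hsp1.eq z1 hm1
  have hv1 : αf - I₁ * βf = F z1' + G z1' * J₁ := by
    have h0 := hrepf (-I₁) (sph_neg hI₁)
    rw [neg_pt x₀ y₀ I₁, neg_mul, ← sub_eq_add_neg] at h0
    rw [← h0]
    exact hsp1.eq z1' hm1'
  obtain ⟨hc1, hc2⟩ := conj_vals hI₁ hJ₁ hO₁ (hsp1.mapsF z1 hm1) (hsp1.mapsG z1 hm1)
    (hsp1.mapsF z1' hm1') (hsp1.mapsG z1' hm1') hu1 hv1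
  have hfcz1 : fc z1 = star αf + I₁ * star βf := by
    rw [hfc_eq z1 hm1, hstarz1, ← hc1]
  have hfcz1' : fc z1' = star αf - I₁ * star βf := by
    rw [hfc_eq z1' hm1', hstarz1', ← hc2]
  -- representation for fc, base slice I₁
  have hrepc : ∀ L ∈ Sph, fc ((x₀:H) + y₀ • L) = star αf + L * star βf := by
    intro L hL
    rw [rep_formula Ω hΩ fc hfcreg hI₁ hL x₀ y₀ hm1.1, hfcz1, hfcz1',
      rep_eval1 hI₁2, rep_eval2 hI₁2]
  -- slice I₂ components
  have hu2 : αf + I₂ * βf = F₁ z2 + G₁ z2 * J₂ := by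
    rw [← hrepf I₂ hI₂]
    exact hspf.eq z2 hm2
  have hv2 : αf - I₂ * βf = F₁ z2' + G₁ z2' * J₂ := by
    have h0 := hrepf (-I₂) (sph_neg hI₂)
    rw [neg_pt x₀ y₀ I₂, neg_mul, ← sub_eq_add_neg] at h0
    rw [← h0]
    exact hspf.eq z2' hm2'
  have ha := hspf.mapsF z2 hm2
  have hb := hspf.mapsG z2 hm2
  have hc := hspf.mapsF z2' hm2'
  have hd := hspf.mapsG z2' hm2'
  obtain ⟨k1, k2⟩ := conj_vals hI₂ hJ₂ hO₂ ha hb hc hd hu2 hv2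
  -- identify the splitting of fc on slice I₂
  have hfcz2 : fc z2 = star αf + I₂ * star βf := hrepc I₂ hI₂
  have hfcz2' : fc z2' = star αf - I₂ * star βf := by
    have h0 := hrepc (-I₂) (sph_neg hI₂)
    rw [neg_pt x₀ y₀ I₂, neg_mul, ← sub_eq_add_neg] at h0
    exact h0
  have hF'z2 : F₁' z2 = star (F₁ z2') ∧ G₁' z2 = -(G₁ z2) := by
    apply slice_decomp_unique hI₂ hJ₂ hO₂ (hspc.mapsF z2 hm2) (hspc.mapsG z2 hm2)
      (slice_star hI₂ hc) (slice_neg hb)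
    rw [← hspc.eq z2 hm2, hfcz2, k1, neg_mul, ← sub_eq_add_neg]
  have hF'z2' : F₁' z2' = star (F₁ z2) ∧ G₁' z2' = -(G₁ z2') := by
    apply slice_decomp_unique hI₂ hJ₂ hO₂ (hspc.mapsF z2' hm2') (hspc.mapsG z2' hm2')
      (slice_star hI₂ ha) (slice_neg hd)
    rw [← hspc.eq z2' hm2', hfcz2', k2, neg_mul, ← sub_eq_add_neg]
  -- the invariant w and the values of fs
  set w : H := F₁ z2 * star (F₁ z2') + G₁ z2 * star (G₁ z2') with hw
  have hwmem : w ∈ Slice I₂ :=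
    slice_add (slice_mul hI₂ ha (slice_star hI₂ hc)) (slice_mul hI₂ hb (slice_star hI₂ hd))
  have hfsz2 : fs z2 = w := by
    rw [hfs_eq z2 hm2, hstarz2, hF'z2.1, hF'z2.2, hF'z2'.1, hF'z2'.2]
    rw [star_neg, mul_neg, sub_neg_eq_add, star_star, mul_neg,
      slice_comm hI₂ hb ha, neg_add_cancel, zero_mul, add_zero, hw]
  have hfsz2' : fs z2' = star w := by
    rw [hfs_eq z2' hm2', hstarz2', hF'z2'.1, hF'z2'.2, hF'z2.1, hF'z2.2]
    rw [star_neg, mul_neg, sub_neg_eq_add, star_star, mul_neg,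
      slice_comm hI₂ hd hc, neg_add_cancel, zero_mul, add_zero]
    rw [hw, star_add, star_mul, star_star, star_mul, star_star]
  -- representation for fs, base slice I₂
  set αs : H := (2⁻¹:ℝ) • (w + star w) with hαs
  set βs : H := (2⁻¹:ℝ) • (I₂ * (star w - w)) with hβs
  have hrepfs : ∀ L ∈ Sph, fs ((x₀:H) + y₀ • L) = αs + L * βs := by
    intro L hL
    rw [rep_formula Ω hΩ fs hfsreg hI₂ hL x₀ y₀ hm2.1, hfsz2, hfsz2']
  -- translation: existence of a zero on the sphere
  have hchar : ∀ (g : H → H) (αg βg : H), (∀ L ∈ Sph, g ((x₀:H) + y₀ • L) = αg + L * βg) →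
      ((∃ q ∈ sphSet x₀ y₀, g q = 0) ↔ ∃ L ∈ Sph, αg + L * βg = 0) := by
    intro g αg βg hrep
    constructor
    · rintro ⟨q, ⟨L, hL, rfl⟩, h0⟩
      exact ⟨L, hL, by rw [← hrep L hL]; exact h0⟩
    · rintro ⟨L, hL, h0⟩
      exact ⟨(x₀:H) + y₀ • L, ⟨L, hL, rfl⟩, by rw [hrep L hL]; exact h0⟩
  -- three equivalences to w = 0
  have hPf : (∃ q ∈ sphSet x₀ y₀, f q = 0) ↔ w = 0 := by
    rw [hchar f αf βf hrepf]
    exact zero_char hI₂ hJ₂ hO₂ ha hb hc hd hu2 hv2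
  have hPfc : (∃ q ∈ sphSet x₀ y₀, fc q = 0) ↔ w = 0 := by
    rw [hchar fc (star αf) (star βf) hrepc]
    have k1' : star αf + I₂ * star βf = star (F₁ z2') + (-(G₁ z2)) * J₂ := by
      rw [k1, neg_mul, ← sub_eq_add_neg]
    have k2' : star αf - I₂ * star βf = star (F₁ z2) + (-(G₁ z2')) * J₂ := by
      rw [k2, neg_mul, ← sub_eq_add_neg]
    rw [zero_char hI₂ hJ₂ hO₂ (slice_star hI₂ hc) (slice_neg hb) (slice_star hI₂ ha)
      (slice_neg hd) k1' k2']
    have he : star (F₁ z2') * star (star (F₁ z2)) + (-(G₁ z2)) * star (-(G₁ z2')) = w := by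
      rw [star_star, star_neg, neg_mul_neg, hw,
        slice_comm hI₂ (slice_star hI₂ hc) ha]
    rw [he]
  have hPfs : (∃ q ∈ sphSet x₀ y₀, fs q = 0) ↔ w = 0 := by
    rw [hchar fs αs βs hrepfs]
    have hu3 : αs + I₂ * βs = w + 0 * J₂ := by
      rw [zero_mul, add_zero, hαs, hβs]
      exact ab_u hI₂2
    have hv3 : αs - I₂ * βs = star w + 0 * J₂ := by
      rw [zero_mul, add_zero, hαs, hβs]
      exact ab_v hI₂2
    rw [zero_char hI₂ hJ₂ hO₂ hwmem (zero_mem_slice I₂) (slice_star hI₂ hwmem)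
      (zero_mem_slice I₂) hu3 hv3]
    rw [star_star, zero_mul, add_zero, mul_self_eq_zero]
  have hPall : (∀ q ∈ sphSet x₀ y₀, fs q = 0) ↔ w = 0 := by
    constructor
    · intro h
      rw [← hfsz2]
      exact h z2 hz2sph
    · intro h0 q hq
      obtain ⟨L, hL, rfl⟩ := hq
      rw [hrepfs L hL, hαs, hβs, h0]
      simp
  exact ⟨hPf.trans hPfc.symm, hPf.trans hPfs.symm, hPf.trans hPall.symm⟩
end
end

section
/- (Maximum Modulus Principle) Let Ω ⊆ ℍ be a slice domain and f : Ω → ℍ slice regular. If |f| has a relative maximum at some point p ∈ Ω, then f is constant on Ω. -/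
noncomputable section

/-! ### Auxiliary lemmas for the maximum modulus principle -/

namespace MaxModAux

lemma sph_mul {I : H} (hI : I ∈ Sph) : I * I = -1 := by rw [← sq]; exact hI

lemma sph_re_im {I : H} (hI : I * I = -1) :
    I.re = 0 ∧ I.imI ^ 2 + I.imJ ^ 2 + I.imK ^ 2 = 1 := by
  have h1 := congrArg QuaternionAlgebra.re hI
  have h2 := congrArg QuaternionAlgebra.imI hI
  have h3 := congrArg QuaternionAlgebra.imJ hI
  have h4 := congrArg QuaternionAlgebra.imK hI
  simp [Quaternion.re_mul, Quaternion.imI_mul, Quaternion.imJ_mul,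
    Quaternion.imK_mul, Quaternion.re_one, Quaternion.imI_one, Quaternion.imJ_one,
    Quaternion.imK_one] at h1 h2 h3 h4
  constructor
  · nlinarith [sq_nonneg I.re, sq_nonneg I.imI, sq_nonneg I.imJ, sq_nonneg I.imK]
  · nlinarith [sq_nonneg I.re, sq_nonneg I.imI, sq_nonneg I.imJ, sq_nonneg I.imK]

lemma mem_sph_of_re_im {I : H} (h0 : I.re = 0)
    (h1 : I.imI ^ 2 + I.imJ ^ 2 + I.imK ^ 2 = 1) : I ∈ Sph := by
  show I ^ 2 = -1
  rw [sq]
  ext <;> simp [Quaternion.re_mul, Quaternion.imI_mul, Quaternion.imJ_mul,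
    Quaternion.imK_mul, Quaternion.re_one, Quaternion.imI_one, Quaternion.imJ_one,
    Quaternion.imK_one, h0] <;> nlinarith

/-- Every quaternion lies on some slice. -/
lemma exists_slice (p : H) : ∃ I ∈ Sph, p ∈ Slice I := by
  set n : ℝ := Real.sqrt (p.imI ^ 2 + p.imJ ^ 2 + p.imK ^ 2) with hn
  have hnn : 0 ≤ p.imI ^ 2 + p.imJ ^ 2 + p.imK ^ 2 := by positivity
  have hnsq : n ^ 2 = p.imI ^ 2 + p.imJ ^ 2 + p.imK ^ 2 := Real.sq_sqrt hnn
  rcases eq_or_ne n 0 with h0 | h0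
  · -- p is real
    have hz : p.imI = 0 ∧ p.imJ = 0 ∧ p.imK = 0 := by
      rw [h0] at hnsq
      refine ⟨?_, ?_, ?_⟩ <;> nlinarith [sq_nonneg p.imI, sq_nonneg p.imJ, sq_nonneg p.imK]
    refine ⟨(⟨0, 1, 0, 0⟩ : H), mem_sph_of_re_im rfl (by norm_num), p.re, 0, ?_⟩
    ext <;> simp [hz.1, hz.2.1, hz.2.2] <;> erw [zero_smul] <;> rfl
  · refine ⟨n⁻¹ • (⟨0, p.imI, p.imJ, p.imK⟩ : H), ?_, p.re, n, ?_⟩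
    · refine mem_sph_of_re_im (by show n⁻¹ • (0:ℝ) = 0; simp) ?_
      have h2 : n⁻¹ ^ 2 * n ^ 2 = 1 := by field_simp
      show (n⁻¹ • p.imI) ^ 2 + (n⁻¹ • p.imJ) ^ 2 + (n⁻¹ • p.imK) ^ 2 = 1
      simp only [smul_eq_mul, mul_pow]
      nlinarith
    · ext
      · show p.re = p.re + n • (n⁻¹ • (0:ℝ))
        simp
      · show p.imI = 0 + n • (n⁻¹ • p.imI)
        field_simp
        simp [smul_eq_mul, h0]
      · show p.imJ = 0 + n • (n⁻¹ • p.imJ)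
        field_simp
        simp [smul_eq_mul, h0]
      · show p.imK = 0 + n • (n⁻¹ • p.imK)
        field_simp
        simp [smul_eq_mul, h0]

/-- The complex structure on `H` induced by a slice. -/
def sliceModule (I : H) (hI : I * I = -1) : Module ℂ H :=
  Module.compHom H (Complex.liftAux I hI).toRingHom

lemma sliceModule_smul_def (I : H) (hI : I * I = -1) (z : ℂ) (q : H) :
    (letI := sliceModule I hI; z • q) = (Complex.liftAux I hI z) * q := rfl

lemma normSq_slice {I : H} (hI : I * I = -1) (x y : ℝ) :
    Quaternion.normSq ((x : H) + y • I) = x ^ 2 + y ^ 2 := by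
  obtain ⟨h0, h1⟩ := sph_re_im hI
  simp [Quaternion.normSq_def', h0]
  nlinarith

lemma norm_slice {I : H} (hI : I * I = -1) (x y : ℝ) :
    ‖(x : H) + y • I‖ = Real.sqrt (x ^ 2 + y ^ 2) := by
  have := Quaternion.normSq_eq_norm_mul_self ((x : H) + y • I)
  rw [normSq_slice hI] at this
  rw [← Real.sqrt_mul_self (norm_nonneg _), ← this]

lemma lift_eq (I : H) (hI : I * I = -1) (z : ℂ) :
    Complex.liftAux I hI z = (z.re : H) + z.im • I := by
  rw [Complex.liftAux_apply, Quaternion.algebraMap_def]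

lemma norm_lift {I : H} (hI : I * I = -1) (z : ℂ) :
    ‖(Complex.liftAux I hI z : H)‖ = ‖z‖ := by
  rw [lift_eq, norm_slice hI, Complex.norm_def, Complex.normSq_apply]
  ring_nf

lemma isometry_lift {I : H} (hI : I * I = -1) :
    Isometry (Complex.liftAux I hI) :=
  AddMonoidHomClass.isometry_of_norm _ (norm_lift hI)

lemma range_lift {I : H} (hI : I * I = -1) :
    Set.range (Complex.liftAux I hI) = Slice I := by
  ext q
  constructor
  · rintro ⟨z, rfl⟩
    exact ⟨z.re, z.im, by rw [lift_eq]⟩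
  · rintro ⟨x, y, rfl⟩
    exact ⟨⟨x, y⟩, by rw [lift_eq]⟩

def sliceNS (I : H) (hI : I * I = -1) :
    letI := sliceModule I hI; NormedSpace ℂ H :=
  letI := sliceModule I hI
  { norm_smul_le := fun z q => by
      rw [sliceModule_smul_def, norm_mul, norm_lift hI] }

lemma sliceTower (I : H) (hI : I * I = -1) :
    letI := sliceModule I hI; IsScalarTower ℝ ℂ H := by
  letI := sliceModule I hI
  constructor
  intro r z q
  show (Complex.liftAux I hI (r • z)) * q = r • ((Complex.liftAux I hI z) * q)
  rw [map_smul, smul_mul_assoc]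

lemma slice_differentiableAt (Ω : Set H) (f : H → H) (I : H) (hI : I * I = -1)
    (hol : HoloSlice Ω f I) (z : ℂ) (hz : (Complex.liftAux I hI z : H) ∈ Ω) :
    letI := sliceModule I hI
    letI := sliceNS I hI
    DifferentiableAt ℂ (fun w : ℂ => f (Complex.liftAux I hI w)) z := by
  letI := sliceModule I hI
  letI := sliceNS I hI
  letI := sliceTower I hI
  haveI : IsBoundedSMul ℂ H := NormedSpace.toIsBoundedSMul
  rw [lift_eq] at hz
  obtain ⟨hdiff, hCR⟩ := hol z.re z.im hz
  set fhat : ℝ × ℝ → H := fun p => f ((p.1 : H) + p.2 • I) with hfhat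
  set L : ℝ × ℝ →L[ℝ] H := fderiv ℝ fhat (z.re, z.im) with hLdef
  have hL : HasFDerivAt fhat L (z.re, z.im) := hdiff.hasFDerivAt
  have key : (fun w : ℂ => f (Complex.liftAux I hI w))
      = fhat ∘ (Complex.equivRealProdCLM : ℂ →L[ℝ] ℝ × ℝ) := by
    funext w
    simp only [Function.comp, hfhat, lift_eq]
    rfl
  set v : H := L (1, 0) with hv
  have hL01 : L (0, 1) = I * v := by
    have h0 : I * L (0, 1) = -v := (neg_eq_of_add_eq_zero_right hCR).symm
    have h1 : I * (I * L (0, 1)) = I * (-v) := by rw [h0]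
    rw [← mul_assoc, hI] at h1
    rw [show I * -v = -(I*v) from (mul_neg I v)] at h1
    simpa [neg_eq_iff_eq_neg] using h1
  set L' : ℂ →L[ℂ] H := (ContinuousLinearMap.id ℂ ℂ).smulRight v with hL'
  have hg : HasFDerivAt (fun w : ℂ => f (Complex.liftAux I hI w))
      (L.comp (Complex.equivRealProdCLM : ℂ →L[ℝ] ℝ × ℝ)) z := by
    rw [key]
    exact hL.comp z (Complex.equivRealProdCLM.hasFDerivAt)
  have heq : L'.restrictScalars ℝ = L.comp (Complex.equivRealProdCLM : ℂ →L[ℝ] ℝ × ℝ) := by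
    refine ContinuousLinearMap.ext fun w => ?_
    show w • v = L (Complex.equivRealProdCLM w)
    have hw : (Complex.equivRealProdCLM w : ℝ × ℝ) = w.re • ((1:ℝ), (0:ℝ)) + w.im • (0, 1) := by
      simp [Prod.ext_iff]
    rw [hw, map_add, map_smul, map_smul, hL01, sliceModule_smul_def, lift_eq,
        add_mul, smul_mul_assoc, Quaternion.coe_mul_eq_smul]
  exact (hasFDerivAt_of_restrictScalars ℝ hg heq).differentiableAt

/-- Identity-type principle on a slice: if a slice-holomorphic function equals `c`
at points of the slice arbitrarily close to (but different from) a point `p₀` of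
`Ω ∩ Slice I`, then it equals `c` on all of `Ω ∩ Slice I`. -/
lemma eqOn_slice_of_freq (Ω : Set H) (hopen : IsOpen Ω) (f : H → H) {I : H} (hI : I * I = -1)
    (hol : HoloSlice Ω f I) (hconn : IsPreconnected (Ω ∩ Slice I))
    (p₀ : H) (hp₀ : p₀ ∈ Ω ∩ Slice I) (c : H)
    (hfreq : ∀ δ > (0:ℝ), ∃ q, q ∈ Ω ∩ Slice I ∧ q ≠ p₀ ∧ ‖q - p₀‖ < δ ∧ f q = c) :
    ∀ q ∈ Ω ∩ Slice I, f q = c := by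
  letI := sliceModule I hI
  letI := sliceNS I hI
  set φ := Complex.liftAux I hI with hφ
  set g : ℂ → H := fun w => f (φ w) with hg
  set U : Set ℂ := φ ⁻¹' Ω with hU
  have hiso := isometry_lift hI
  have hUopen : IsOpen U := hopen.preimage hiso.continuous
  have himg : φ '' U = Ω ∩ Slice I := by
    rw [hU, Set.image_preimage_eq_inter_range, range_lift hI, Set.inter_comm]
  have hUconn : IsPreconnected U := by
    have := hiso.isEmbedding.toIsInducing.isPreconnected_image (s := U)
    rw [himg] at this
    exact this.mp hconn
  have hga : AnalyticOnNhd ℂ g U := by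
    refine DifferentiableOn.analyticOnNhd (fun z hz => ?_) hUopen
    exact (slice_differentiableAt Ω f I hI hol z hz).differentiableWithinAt
  obtain ⟨z₀, hz₀⟩ : ∃ z₀, φ z₀ = p₀ := by
    have : p₀ ∈ Set.range φ := by rw [range_lift hI]; exact hp₀.2
    exact this
  have hz₀U : z₀ ∈ U := by rw [hU, Set.mem_preimage, hz₀]; exact hp₀.1
  have hfreq' : ∃ᶠ w in nhdsWithin z₀ {z₀}ᶜ, g w = (fun _ => c) w := by
    rw [Filter.frequently_iff]
    intro s hs
    rcases Metric.mem_nhdsWithin_iff.1 hs with ⟨ε, hε, hsub⟩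
    obtain ⟨q, hqΩ, hqne, hqlt, hqc⟩ := hfreq ε hε
    obtain ⟨z, hz⟩ : ∃ z, φ z = q := by
      have : q ∈ Set.range φ := by rw [range_lift hI]; exact hqΩ.2
      exact this
    have hzball : z ∈ Metric.ball z₀ ε := by
      rw [Metric.mem_ball, dist_eq_norm]
      have : ‖φ (z - z₀)‖ = ‖z - z₀‖ := norm_lift hI _
      rw [map_sub, hz, hz₀] at this
      rw [← this, ← dist_eq_norm]
      rw [dist_eq_norm]
      exact hqlt
    have hzne : z ∈ ({z₀}ᶜ : Set ℂ) := by
      simp only [Set.mem_compl_iff, Set.mem_singleton_iff]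
      rintro rfl
      exact hqne (hz₀ ▸ hz.symm ▸ rfl)
    exact ⟨z, hsub ⟨hzball, hzne⟩, by rw [hg]; simp only []; rw [hz]; exact hqc⟩
  have := hga.eqOn_of_preconnected_of_frequently_eq analyticOnNhd_const hUconn hz₀U hfreq'
  intro q hq
  obtain ⟨z, hz⟩ : ∃ z, φ z = q := by
    have : q ∈ Set.range φ := by rw [range_lift hI]; exact hq.2
    exact this
  have hzU : z ∈ U := by rw [hU, Set.mem_preimage, hz]; exact hq.1
  have := this hzU
  rw [hg] at this
  simpa [hz] using this

/-- Local maximum of the norm forces local constancy on the slice through the point. -/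
lemma local_const_of_max (Ω : Set H) (hopen : IsOpen Ω) (f : H → H) {I : H} (hI : I * I = -1)
    (hol : HoloSlice Ω f I) (p : H) (hpΩ : p ∈ Ω) (hpI : p ∈ Slice I)
    {ε : ℝ} (hε : 0 < ε) (hmax : ∀ q ∈ Ω, ‖q - p‖ < ε → ‖f q‖ ≤ ‖f p‖) :
    ∃ δ > (0:ℝ), ∀ q ∈ Slice I, ‖q - p‖ < δ → q ∈ Ω ∧ f q = f p := by
  letI := sliceModule I hI
  letI := sliceNS I hI
  set φ := Complex.liftAux I hI with hφ
  set g : ℂ → H := fun w => f (φ w) with hg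
  have hiso := isometry_lift hI
  obtain ⟨ρ, hρ, hball⟩ := Metric.isOpen_iff.1 hopen p hpΩ
  obtain ⟨z₀, hz₀⟩ : ∃ z₀, φ z₀ = p := by
    have : p ∈ Set.range φ := by rw [range_lift hI]; exact hpI
    exact this
  set δ : ℝ := min ε ρ with hδdef
  have hδ : 0 < δ := lt_min hε hρ
  have hmem : ∀ w ∈ Metric.ball z₀ δ, φ w ∈ Ω ∧ ‖φ w - p‖ < ε := by
    intro w hw
    rw [Metric.mem_ball, dist_eq_norm] at hw
    have hnorm : ‖φ w - p‖ = ‖w - z₀‖ := by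
      rw [← hz₀, ← map_sub]; exact norm_lift hI _
    constructor
    · apply hball
      rw [Metric.mem_ball, dist_eq_norm, hnorm]
      exact lt_of_lt_of_le hw (min_le_right _ _)
    · rw [hnorm]; exact lt_of_lt_of_le hw (min_le_left _ _)
  have hdiff : DifferentiableOn ℂ g (Metric.ball z₀ δ) := by
    intro w hw
    exact (slice_differentiableAt Ω f I hI hol w (hmem w hw).1).differentiableWithinAt
  have hmaxOn : IsMaxOn (norm ∘ g) (Metric.ball z₀ δ) z₀ := by
    intro w hw
    have := hmem w hw
    show ‖g w‖ ≤ ‖g z₀‖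
    rw [hg]; simp only []
    rw [hz₀]
    exact hmax (φ w) this.1 this.2
  have heq := Complex.eqOn_of_isPreconnected_of_isMaxOn_norm
    (convex_ball z₀ δ).isPreconnected Metric.isOpen_ball hdiff
    (Metric.mem_ball_self hδ) hmaxOn
  refine ⟨δ, hδ, fun q hqI hqδ => ?_⟩
  obtain ⟨z, hz⟩ : ∃ z, φ z = q := by
    have : q ∈ Set.range φ := by rw [range_lift hI]; exact hqI
    exact this
  have hzball : z ∈ Metric.ball z₀ δ := by
    rw [Metric.mem_ball, dist_eq_norm]
    have hnorm : ‖q - p‖ = ‖z - z₀‖ := by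
      rw [← hz, ← hz₀, ← map_sub]; exact norm_lift hI _
    rw [← hnorm]; exact hqδ
  refine ⟨hz ▸ (hmem z hzball).1, ?_⟩
  have := heq hzball
  simp only [Function.const] at this
  rw [hg] at this
  simp only [] at this
  rw [hz, hz₀] at this
  exact this

end MaxModAux

/-- Maximum Modulus Principle: if `|f|` has a relative maximum
at `p ∈ Ω`, then `f` is constant on `Ω`. -/
theorem maximum_modulus_principle (Ω : Set H) (hΩ : IsSliceDomain Ω)
    (f : H → H) (hf : SliceRegular Ω f) (p : H) (hp : p ∈ Ω)
    (hmax : ∃ ε > (0 : ℝ), ∀ q ∈ Ω, ‖q - p‖ < ε → ‖f q‖ ≤ ‖f p‖) :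
    ∀ q ∈ Ω, f q = f p := by
  obtain ⟨hopen, hconnΩ, hreal, hslices⟩ := hΩ
  obtain ⟨ε, hε, hmax⟩ := hmax
  obtain ⟨I₀, hI₀, hpI₀⟩ := MaxModAux.exists_slice p
  have hI₀' : I₀ * I₀ = -1 := MaxModAux.sph_mul hI₀
  have hnormI₀ : ‖I₀‖ = 1 := by
    have h := Quaternion.normSq_eq_norm_mul_self I₀
    obtain ⟨h0, h1⟩ := MaxModAux.sph_re_im hI₀'
    rw [Quaternion.normSq_def', h0] at h
    nlinarith [norm_nonneg I₀]
  have hI₀ne : I₀ ≠ 0 := by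
    intro h; rw [h, norm_zero] at hnormI₀; norm_num at hnormI₀
  obtain ⟨δ, hδ, hloc⟩ :=
    MaxModAux.local_const_of_max Ω hopen f hI₀' (hf I₀ hI₀) p hp hpI₀ hε hmax
  have h1 : ∀ q ∈ Ω ∩ Slice I₀, f q = f p := by
    apply MaxModAux.eqOn_slice_of_freq Ω hopen f hI₀' (hf I₀ hI₀)
      (hslices I₀ hI₀).isPreconnected p ⟨hp, hpI₀⟩ (f p)
    intro d hd
    set t : ℝ := min d δ / 2 with ht
    have ht0 : 0 < t := by positivity
    have hnorm : ‖p + t • I₀ - p‖ = t := by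
      rw [add_sub_cancel_left, norm_smul, hnormI₀, Real.norm_eq_abs,
        abs_of_pos ht0, mul_one]
    have htd : t < d := by
      rw [ht]
      have := min_le_left d δ
      linarith
    have htδ : t < δ := by
      rw [ht]
      have := min_le_right d δ
      linarith
    have hsl : p + t • I₀ ∈ Slice I₀ := by
      obtain ⟨x, y, hxy⟩ := hpI₀
      exact ⟨x, y + t, by rw [hxy, add_smul, add_assoc]⟩
    have hne : p + t • I₀ ≠ p := by
      intro h
      have : t • I₀ = 0 := by
        have := congrArg (fun w => w - p) h
        simpa [add_sub_cancel_left] using this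
      exact (smul_ne_zero ht0.ne' hI₀ne) this
    obtain ⟨hmem, hfeq⟩ := hloc (p + t • I₀) hsl (by rw [hnorm]; exact htδ)
    exact ⟨p + t • I₀, ⟨hmem, hsl⟩, hne, by rw [hnorm]; exact htd, hfeq⟩
  have hrealconst : ∀ t : ℝ, (t : H) ∈ Ω → f t = f p := by
    intro t htΩ
    exact h1 _ ⟨htΩ, t, 0, by simp⟩
  obtain ⟨r0, hr0Ω, r, hr0eq⟩ := hreal
  intro q hq
  obtain ⟨J, hJ, hqJ⟩ := MaxModAux.exists_slice q
  have hJ' : J * J = -1 := MaxModAux.sph_mul hJ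
  have hr0J : r0 ∈ Slice J := ⟨r, 0, by rw [hr0eq]; simp⟩
  refine MaxModAux.eqOn_slice_of_freq Ω hopen f hJ' (hf J hJ)
    (hslices J hJ).isPreconnected r0 ⟨hr0Ω, hr0J⟩ (f p) ?_ q ⟨hq, hqJ⟩
  intro d hd
  obtain ⟨ρ, hρ, hball⟩ := Metric.isOpen_iff.1 hopen r0 hr0Ω
  set s : ℝ := min d ρ / 2 with hs
  have hs0 : 0 < s := by positivity
  have hsd : s < d := by
    rw [hs]; have := min_le_left d ρ; linarith
  have hsρ : s < ρ := by
    rw [hs]; have := min_le_right d ρ; linarith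
  refine ⟨((r + s : ℝ) : H), ⟨?_, ?_⟩, ?_, ?_, ?_⟩
  · apply hball
    rw [Metric.mem_ball, dist_eq_norm, hr0eq]
    have : ((r + s : ℝ) : H) - (r : H) = ((s : ℝ) : H) := by push_cast; rw [add_sub_cancel_left]
    rw [this, Quaternion.norm_coe, Real.norm_eq_abs, abs_of_pos hs0]
    exact hsρ
  · exact ⟨r + s, 0, by simp⟩
  · rw [hr0eq]
    intro h
    have := Quaternion.coe_injective h
    linarith
  · rw [hr0eq]
    have : ((r + s : ℝ) : H) - (r : H) = ((s : ℝ) : H) := by push_cast; rw [add_sub_cancel_left]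
    rw [this, Quaternion.norm_coe, Real.norm_eq_abs, abs_of_pos hs0]
    exact hsd
  · apply hrealconst
    apply hball
    rw [Metric.mem_ball, dist_eq_norm, hr0eq]
    have : ((r + s : ℝ) : H) - (r : H) = ((s : ℝ) : H) := by push_cast; rw [add_sub_cancel_left]
    rw [this, Quaternion.norm_coe, Real.norm_eq_abs, abs_of_pos hs0]
    exact hsρ
end
end
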